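/- Fix reals a > b > 0, w0 > 0, w1 > 0 and λ > 0. Define u0(x) = (w0/(2·ln 2)) · a/(1 + a·x) − λ and u1(x) = (w1/(2·ln 2)) · (a/(1 + a·x) − b/(1 + b·x)) − λ, and for p0, p1 ≥ 0 define L1(p0, p1) = (w0/2)·log2((1 + a·(p0 + p1))/(1 + a·p1)) + (w1/2)·log2((1 + a·p1)/(1 + b·p1)) − λ·(p0 + p1). Then for all p0, p1 ≥ 0, L1(p0, p1) ≤ ∫_{0}^{∞} max(max(u0(x), u1(x)), 0) dx, and this integral is finite. -/

import Mathlib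

open MeasureTheory

theorem L1_aux (a b w0 w1 lam : ℝ) (hb : 0 < b) (hba : b < a)
    (hw0 : 0 < w0) (hw1 : 0 < w1) (hlam : 0 < lam) :
    (∀ p0 p1 : ℝ, 0 ≤ p0 → 0 ≤ p1 →
      (w0 / 2) * Real.logb 2 ((1 + a * (p0 + p1)) / (1 + a * p1)) +
      (w1 / 2) * Real.logb 2 ((1 + a * p1) / (1 + b * p1)) - lam * (p0 + p1) ≤
        ∫ x in Set.Ioi (0:ℝ),
          max (max (w0 / (2 * Real.log 2) * (a / (1 + a * x)) - lam)
            (w1 / (2 * Real.log 2) * (a / (1 + a * x) - b / (1 + b * x)) - lam)) 0) ∧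
    IntegrableOn (fun x =>
      max (max (w0 / (2 * Real.log 2) * (a / (1 + a * x)) - lam)
        (w1 / (2 * Real.log 2) * (a / (1 + a * x) - b / (1 + b * x)) - lam)) 0)
      (Set.Ioi (0:ℝ)) := by
  have hlog2 : 0 < Real.log 2 := Real.log_pos (by norm_num)
  have ha : 0 < a := hb.trans hba
  set c0 : ℝ := w0 / (2 * Real.log 2) with hc0
  set c1 : ℝ := w1 / (2 * Real.log 2) with hc1
  have hc0pos : 0 < c0 := div_pos hw0 (by positivity)
  have hc1pos : 0 < c1 := div_pos hw1 (by positivity)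
  set u0 : ℝ → ℝ := fun x => c0 * (a / (1 + a * x)) - lam with hu0
  set u1 : ℝ → ℝ := fun x => c1 * (a / (1 + a * x) - b / (1 + b * x)) - lam with hu1
  set f : ℝ → ℝ := fun x => max (max (u0 x) (u1 x)) 0 with hf
  have hda : ∀ x : ℝ, 0 ≤ x → (0:ℝ) < 1 + a * x := fun x hx => by
    nlinarith [mul_nonneg ha.le hx]
  have hdb : ∀ x : ℝ, 0 ≤ x → (0:ℝ) < 1 + b * x := fun x hx => by
    nlinarith [mul_nonneg hb.le hx]
  -- continuity
  have hu0c : ContinuousOn u0 (Set.Ici 0) := by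
    apply ContinuousOn.sub _ continuousOn_const
    exact ContinuousOn.mul continuousOn_const
      (ContinuousOn.div continuousOn_const (by fun_prop) fun x hx => (hda x hx).ne')
  have hu1c : ContinuousOn u1 (Set.Ici 0) := by
    apply ContinuousOn.sub _ continuousOn_const
    refine ContinuousOn.mul continuousOn_const (ContinuousOn.sub ?_ ?_)
    · exact ContinuousOn.div continuousOn_const (by fun_prop) fun x hx => (hda x hx).ne'
    · exact ContinuousOn.div continuousOn_const (by fun_prop) fun x hx => (hdb x hx).ne'
  have hfc : ContinuousOn f (Set.Ici 0) := fun x hx =>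
    (((hu0c x hx).max (hu1c x hx)).max continuousWithinAt_const)
  have hfnn : ∀ x, 0 ≤ f x := fun x => le_max_right _ _
  -- vanishing for large x
  set X : ℝ := max c0 c1 / lam with hXdef
  have hXpos : 0 < X := div_pos (lt_max_of_lt_left hc0pos) hlam
  have hzero : ∀ x : ℝ, X ≤ x → f x = 0 := by
    intro x hx
    have hxpos : 0 < x := hXpos.trans_le hx
    have key : a / (1 + a * x) ≤ 1 / x := by
      rw [div_le_div_iff₀ (hda x hxpos.le) hxpos]; nlinarith
    have hmx : max c0 c1 ≤ lam * x := by
      rw [hXdef, div_le_iff₀ hlam] at hx; linarith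
    have h0 : u0 x ≤ 0 := by
      have h1 : c0 * (a / (1 + a * x)) ≤ c0 * (1 / x) :=
        mul_le_mul_of_nonneg_left key hc0pos.le
      have h2 : c0 * (1 / x) ≤ lam := by
        rw [mul_one_div, div_le_iff₀ hxpos]
        nlinarith [le_max_left c0 c1]
      simp only [hu0]; linarith
    have h1 : u1 x ≤ 0 := by
      have hb0 : 0 ≤ b / (1 + b * x) := div_nonneg hb.le (hdb x hxpos.le).le
      have h1 : c1 * (a / (1 + a * x) - b / (1 + b * x)) ≤ c1 * (1 / x) := by
        apply mul_le_mul_of_nonneg_left _ hc1pos.le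
        linarith
      have h2 : c1 * (1 / x) ≤ lam := by
        rw [mul_one_div, div_le_iff₀ hxpos]
        nlinarith [le_max_right c0 c1]
      simp only [hu1]; linarith
    simp only [hf]
    rw [max_eq_right (max_le h0 h1)]
  -- integrability
  have hfint : IntegrableOn f (Set.Ioi 0) := by
    have h1 : IntegrableOn f (Set.Ioc 0 X) :=
      ((hfc.mono Set.Icc_subset_Ici_self).integrableOn_Icc).mono_set Set.Ioc_subset_Icc_self
    have h2 : IntegrableOn f (Set.Ioi X) := by
      have heq : Set.EqOn f 0 (Set.Ioi X) := fun x hx => hzero x (le_of_lt hx)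
      exact (integrableOn_congr_fun heq measurableSet_Ioi).mpr (integrableOn_zero)
    have : IntegrableOn f (Set.Ioc 0 X ∪ Set.Ioi X) := h1.union h2
    apply this.mono_set
    intro x hx
    rcases le_or_gt x X with h | h
    · exact Or.inl ⟨hx, h⟩
    · exact Or.inr h
  refine ⟨?_, hfint⟩
  intro p0 p1 hp0 hp1
  have hp11 : p1 ≤ p1 + p0 := by linarith
  have hA : (0:ℝ) < 1 + a * (p1 + p0) := hda _ (by linarith)
  have hB : (0:ℝ) < 1 + a * p1 := hda _ hp1
  have hC : (0:ℝ) < 1 + b * p1 := hdb _ hp1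
  -- FTC for u0 on [p1, p1+p0]
  have huIcc0 : Set.uIcc p1 (p1 + p0) = Set.Icc p1 (p1 + p0) := Set.uIcc_of_le hp11
  have huIcc1 : Set.uIcc (0:ℝ) p1 = Set.Icc 0 p1 := Set.uIcc_of_le hp1
  have hlin : ∀ x : ℝ, HasDerivAt (fun y : ℝ => lam * y) lam x := fun x => by
    simpa using (hasDerivAt_id x).const_mul lam
  have hderiv_a : ∀ x : ℝ, 0 ≤ x →
      HasDerivAt (fun y => Real.log (1 + a * y)) (a / (1 + a * x)) x := by
    intro x hx
    have h1 : HasDerivAt (fun y : ℝ => 1 + a * y) a x := by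
      simpa using ((hasDerivAt_id x).const_mul a).const_add 1
    have := (Real.hasDerivAt_log (hda x hx).ne').comp x h1
    rw [div_eq_inv_mul]; exact this
  have hderiv_b : ∀ x : ℝ, 0 ≤ x →
      HasDerivAt (fun y => Real.log (1 + b * y)) (b / (1 + b * x)) x := by
    intro x hx
    have h1 : HasDerivAt (fun y : ℝ => 1 + b * y) b x := by
      simpa using ((hasDerivAt_id x).const_mul b).const_add 1
    have := (Real.hasDerivAt_log (hdb x hx).ne').comp x h1
    rw [div_eq_inv_mul]; exact this
  have hF0 : ∀ x ∈ Set.uIcc p1 (p1 + p0),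
      HasDerivAt (fun y => c0 * Real.log (1 + a * y) - lam * y) (u0 x) x := by
    intro x hx
    rw [huIcc0] at hx
    have hx0 : 0 ≤ x := hp1.trans hx.1
    exact ((hderiv_a x hx0).const_mul c0).sub (hlin x)
  have hF1 : ∀ x ∈ Set.uIcc (0:ℝ) p1,
      HasDerivAt (fun y => c1 * (Real.log (1 + a * y) - Real.log (1 + b * y)) - lam * y)
        (u1 x) x := by
    intro x hx
    rw [huIcc1] at hx
    exact (((hderiv_a x hx.1).sub (hderiv_b x hx.1)).const_mul c1).sub
      (hlin x)
  have hI0 : IntervalIntegrable u0 volume p1 (p1 + p0) := by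
    apply ContinuousOn.intervalIntegrable
    apply hu0c.mono
    rw [huIcc0]
    exact fun x hx => hp1.trans hx.1
  have hI1 : IntervalIntegrable u1 volume 0 p1 := by
    apply ContinuousOn.intervalIntegrable
    apply hu1c.mono
    rw [huIcc1]
    exact fun x hx => hx.1
  have hEq0 : ∫ x in p1..(p1 + p0), u0 x =
      (c0 * Real.log (1 + a * (p1 + p0)) - lam * (p1 + p0)) -
      (c0 * Real.log (1 + a * p1) - lam * p1) := by
    simpa using intervalIntegral.integral_eq_sub_of_hasDerivAt hF0 hI0
  have hEq1 : ∫ x in (0:ℝ)..p1, u1 x =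
      (c1 * (Real.log (1 + a * p1) - Real.log (1 + b * p1)) - lam * p1) -
      (c1 * (Real.log (1 + a * 0) - Real.log (1 + b * 0)) - lam * 0) := by
    simpa using intervalIntegral.integral_eq_sub_of_hasDerivAt hF1 hI1
  -- identify L1 with the sum of the two integrals
  have hL1 : (w0 / 2) * Real.logb 2 ((1 + a * (p0 + p1)) / (1 + a * p1)) +
      (w1 / 2) * Real.logb 2 ((1 + a * p1) / (1 + b * p1)) - lam * (p0 + p1) =
      (∫ x in p1..(p1 + p0), u0 x) + ∫ x in (0:ℝ)..p1, u1 x := by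
    rw [hEq0, hEq1]
    have hcomm : p0 + p1 = p1 + p0 := add_comm _ _
    rw [hcomm, Real.logb, Real.logb, Real.log_div hA.ne' hB.ne',
      Real.log_div hB.ne' hC.ne']
    simp only [mul_zero, add_zero, Real.log_one, hc0, hc1]
    have h2 : Real.log 2 ≠ 0 := hlog2.ne'
    field_simp
    ring
  rw [hL1]
  -- bound each integral by the integral of f over the corresponding Ioc
  rw [intervalIntegral.integral_of_le hp11, intervalIntegral.integral_of_le hp1]
  have hsub2 : Set.Ioc p1 (p1 + p0) ⊆ Set.Ioi 0 := fun x hx => hp1.trans_lt hx.1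
  have hsub1 : Set.Ioc (0:ℝ) p1 ⊆ Set.Ioi 0 := fun x hx => hx.1
  have hb0 : ∫ x in Set.Ioc p1 (p1 + p0), u0 x ≤ ∫ x in Set.Ioc p1 (p1 + p0), f x := by
    apply setIntegral_mono_on hI0.1 (hfint.mono_set hsub2) measurableSet_Ioc
    intro x _
    exact (le_max_left _ _).trans (le_max_left _ _)
  have hb1 : ∫ x in Set.Ioc (0:ℝ) p1, u1 x ≤ ∫ x in Set.Ioc (0:ℝ) p1, f x := by
    apply setIntegral_mono_on hI1.1 (hfint.mono_set hsub1) measurableSet_Ioc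
    intro x _
    exact (le_max_right _ _).trans (le_max_left _ _)
  have hunion : (∫ x in Set.Ioc p1 (p1 + p0), f x) + ∫ x in Set.Ioc (0:ℝ) p1, f x
      ≤ ∫ x in Set.Ioi (0:ℝ), f x := by
    have hdisj : Disjoint (Set.Ioc (0:ℝ) p1) (Set.Ioc p1 (p1 + p0)) :=
      Set.Ioc_disjoint_Ioc_of_le le_rfl
    have hun : (∫ x in Set.Ioc (0:ℝ) p1 ∪ Set.Ioc p1 (p1 + p0), f x) =
        (∫ x in Set.Ioc (0:ℝ) p1, f x) + ∫ x in Set.Ioc p1 (p1 + p0), f x :=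
      setIntegral_union hdisj measurableSet_Ioc (hfint.mono_set hsub1)
        (hfint.mono_set hsub2)
    have hmono : (∫ x in Set.Ioc (0:ℝ) p1 ∪ Set.Ioc p1 (p1 + p0), f x) ≤
        ∫ x in Set.Ioi (0:ℝ), f x := by
      apply setIntegral_mono_set hfint
      · exact Filter.Eventually.of_forall hfnn
      · exact HasSubset.Subset.eventuallyLE (Set.union_subset hsub1 hsub2)
    linarith [hun ▸ hmono]
  linarith

theorem L1_upper_bound (a b w0 w1 lam : ℝ) (hb : 0 < b) (hba : b < a)
    (hw0 : 0 < w0) (hw1 : 0 < w1) (hlam : 0 < lam) :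
    let u0 : ℝ → ℝ := fun x => w0 / (2 * Real.log 2) * (a / (1 + a * x)) - lam
    let u1 : ℝ → ℝ := fun x =>
      w1 / (2 * Real.log 2) * (a / (1 + a * x) - b / (1 + b * x)) - lam
    let L1 : ℝ → ℝ → ℝ := fun p0 p1 =>
      (w0 / 2) * Real.logb 2 ((1 + a * (p0 + p1)) / (1 + a * p1)) +
      (w1 / 2) * Real.logb 2 ((1 + a * p1) / (1 + b * p1)) - lam * (p0 + p1)
    (∀ p0 p1 : ℝ, 0 ≤ p0 → 0 ≤ p1 →
      L1 p0 p1 ≤ ∫ x in Set.Ioi (0:ℝ), max (max (u0 x) (u1 x)) 0) ∧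
    IntegrableOn (fun x => max (max (u0 x) (u1 x)) 0) (Set.Ioi (0:ℝ)) := by
  intro u0 u1 L1
  exact L1_aux a b w0 w1 lam hb hba hw0 hw1 hlam
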